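/- Let d ≥ 8 be an even integer, and let μ be a probability measure on ℝ^m with finite moments of degree d such that E_μ x_k^d = 1 for every k ∈ {1,…,m}. Let x^α be a square monomial of degree d (all exponents α_k even, Σ_k α_k = d) that involves at least two distinct variables x_i and x_j (i.e., α_i ≥ 2 and α_j ≥ 2 for some i ≠ j). Then E_μ x^α ≤ (E_μ[|x_i|^{d/2}·|x_j|^{d/2}])^{4/d}. -/

import Mathlib

open MeasureTheory ENNReal

/-- Let `d ≥ 8` be even and `μ` a probability measure on `ℝ^m` with finite moments of
degree `d` and `E x_k^d = 1` for all `k`. If `x^α` is a square monomial of degree `d`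
involving two distinct variables `x i` and `x j`, then
`E x^α ≤ (E |x i|^{d/2} |x j|^{d/2})^{4/d}`. -/
theorem stmt7 (m d : ℕ) (hde : Even d) (hd8 : 8 ≤ d)
    (μ : Measure (Fin m → ℝ)) [IsProbabilityMeasure μ]
    (hint : ∀ α : Fin m → ℕ, (∑ k, α k) ≤ d →
      Integrable (fun x => ∏ k, |x k| ^ α k) μ)
    (hintm : ∀ α : Fin m → ℕ, (∑ k, α k) ≤ d →
      Integrable (fun x => ∏ k, x k ^ α k) μ)
    (hmom : ∀ k, ∫ x, x k ^ d ∂μ = 1)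
    (α : Fin m → ℕ) (hdeg : ∑ k, α k = d) (hsq : ∀ k, Even (α k))
    (i j : Fin m) (hij : i ≠ j) (hi : 2 ≤ α i) (hj : 2 ≤ α j) :
    (∫ x, ∏ k, x k ^ α k ∂μ) ≤
      (∫ x, |x i| ^ (d / 2) * |x j| ^ (d / 2) ∂μ) ^ ((4 : ℝ) / (d : ℝ)) := by
  classical
  obtain ⟨r, hr⟩ := hde
  have hd2 : d / 2 = r := by omega
  have hdpos : (0 : ℝ) < d := by positivity
  have hdne : (d : ℝ) ≠ 0 := hdpos.ne'
  -- the coordinate "e" functions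
  set e : Fin m → (Fin m → ℝ) → ℝ≥0∞ := fun k x => ENNReal.ofReal |x k| with he
  -- weights
  set γ : Fin m → ℝ := fun k => (if k = i then 2 else 0) + (if k = j then 2 else 0) with hγ
  have hγle : ∀ k, γ k ≤ (α k : ℝ) := by
    intro k
    simp only [hγ]
    split_ifs with h1 h2 h2
    · exact absurd (h1 ▸ h2) hij
    · subst h1; simpa using (by exact_mod_cast hi : (2:ℝ) ≤ α k)
    · subst h2; simpa using (by exact_mod_cast hj : (2:ℝ) ≤ α k)
    · simp
  have hγnn : ∀ k, 0 ≤ γ k := by intro k; simp only [hγ]; positivity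
  have hγsum : ∑ k, γ k = 4 := by
    simp only [hγ, Finset.sum_add_distrib, Finset.sum_ite_eq' Finset.univ,
      Finset.mem_univ, if_true]
    norm_num
  -- the Hölder data
  set p : Option (Fin m) → ℝ := fun o => o.elim (4 / d) (fun k => ((α k : ℝ) - γ k) / d) with hp
  set f : Option (Fin m) → (Fin m → ℝ) → ℝ≥0∞ := fun o =>
    o.elim (fun x => ENNReal.ofReal (|x i| ^ (d / 2) * |x j| ^ (d / 2)))
      (fun k x => ENNReal.ofReal (|x k| ^ d)) with hf
  have hpnn : ∀ o ∈ (Finset.univ : Finset (Option (Fin m))), 0 ≤ p o := by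
    rintro (_ | k) -
    · simp only [hp, Option.elim]
      exact div_nonneg (by norm_num) hdpos.le
    · simp only [hp, Option.elim]
      exact div_nonneg (by linarith [hγle k]) hdpos.le
  have hpsum : ∑ o : Option (Fin m), p o = 1 := by
    rw [Fintype.sum_option]
    simp only [hp, Option.elim]
    rw [← Finset.sum_div, Finset.sum_sub_distrib, hγsum]
    have : (∑ k, (α k : ℝ)) = d := by exact_mod_cast congrArg (Nat.cast : ℕ → ℝ) hdeg
    rw [this]
    field_simp
    ring
  have hfm : ∀ o ∈ (Finset.univ : Finset (Option (Fin m))), AEMeasurable (f o) μ := by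
    rintro (_ | k) -
    · simp only [hf, Option.elim]
      exact (((measurable_pi_apply i).abs.pow_const _).mul
        ((measurable_pi_apply j).abs.pow_const _)).ennreal_ofReal.aemeasurable
    · exact ((measurable_pi_apply k).abs.pow_const _).ennreal_ofReal.aemeasurable
  -- pointwise identity
  have hpt : ∀ x : Fin m → ℝ,
      ∏ o : Option (Fin m), f o x ^ p o = ENNReal.ofReal (∏ k, |x k| ^ α k) := by
    intro x
    rw [Fintype.prod_option]
    have hbase : ∀ k, f (some k) x ^ p (some k) = e k x ^ ((α k : ℝ) - γ k) := by
      intro k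
      simp only [hf, hp, Option.elim, he]
      rw [ENNReal.ofReal_pow (abs_nonneg _), ← ENNReal.rpow_natCast, ← ENNReal.rpow_mul]
      congr 1
      field_simp
    have hnone : f none x ^ p none = e i x ^ (2:ℝ) * e j x ^ (2:ℝ) := by
      simp only [hf, hp, Option.elim, he]
      rw [ENNReal.ofReal_mul (by positivity), ENNReal.ofReal_pow (abs_nonneg _),
        ENNReal.ofReal_pow (abs_nonneg _), ENNReal.mul_rpow_of_nonneg _ _ (by positivity),
        ← ENNReal.rpow_natCast _ (d/2), ← ENNReal.rpow_natCast _ (d/2),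
        ← ENNReal.rpow_mul, ← ENNReal.rpow_mul]
      have : ((d / 2 : ℕ) : ℝ) * (4 / d) = 2 := by
        rw [hd2, hr]
        have hrpos : (0:ℝ) < r := by
          have : 1 ≤ r := by omega
          exact_mod_cast Nat.lt_of_lt_of_le Nat.zero_lt_one this
        push_cast
        field_simp
        ring
      rw [this]
    rw [hnone, Finset.prod_congr rfl (fun k _ => hbase k),
      ENNReal.ofReal_prod_of_nonneg (fun k _ => by positivity)]
    have hterm : ∀ k, ENNReal.ofReal (|x k| ^ α k)
        = e k x ^ γ k * e k x ^ ((α k : ℝ) - γ k) := by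
      intro k
      rw [← ENNReal.rpow_add_of_nonneg _ _ (hγnn k) (by linarith [hγle k])]
      have h2 : γ k + ((α k : ℝ) - γ k) = ((α k : ℕ) : ℝ) := by ring
      rw [h2, ENNReal.rpow_natCast, ENNReal.ofReal_pow (abs_nonneg _)]
    rw [Finset.prod_congr rfl (fun k _ => hterm k), Finset.prod_mul_distrib]
    congr 1
    have : ∀ k, e k x ^ γ k
        = (if k = i then e k x ^ (2:ℝ) else 1) * (if k = j then e k x ^ (2:ℝ) else 1) := by
      intro k
      simp only [hγ]
      rw [ENNReal.rpow_add_of_nonneg _ _ (by positivity) (by positivity)]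
      congr 1 <;> split_ifs <;> simp
    rw [Finset.prod_congr rfl (fun k _ => this k), Finset.prod_mul_distrib,
      Finset.prod_ite_eq' Finset.univ i (fun k => e k x ^ (2:ℝ)),
      Finset.prod_ite_eq' Finset.univ j (fun k => e k x ^ (2:ℝ))]
    simp
  -- Hölder
  have holder := ENNReal.lintegral_prod_norm_pow_le (μ := μ) Finset.univ hfm hpsum hpnn
  -- compute the single lintegrals
  have hint1 : ∀ k, Integrable (fun x => |x k| ^ d) μ := by
    intro k
    refine (hint (fun l => if l = k then d else 0) ?_).congr ?_
    · rw [Finset.sum_ite_eq' Finset.univ, if_pos (Finset.mem_univ k)]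
    · refine Filter.Eventually.of_forall fun x => ?_
      have : ∀ l, |x l| ^ (if l = k then d else 0) = if l = k then |x l| ^ d else 1 := by
        intro l; split_ifs <;> simp
      beta_reduce
      rw [Finset.prod_congr rfl (fun l _ => this l),
        Finset.prod_ite_eq' Finset.univ k (fun l => |x l| ^ d), if_pos (Finset.mem_univ k)]
  have hintY : Integrable (fun x => |x i| ^ (d/2) * |x j| ^ (d/2)) μ := by
    refine (hint (fun l => (if l = i then d/2 else 0) + (if l = j then d/2 else 0)) ?_).congr ?_
    · rw [Finset.sum_add_distrib, Finset.sum_ite_eq' Finset.univ, Finset.sum_ite_eq' Finset.univ,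
        if_pos (Finset.mem_univ i), if_pos (Finset.mem_univ j)]
      omega
    · refine Filter.Eventually.of_forall fun x => ?_
      have : ∀ l, |x l| ^ ((if l = i then d/2 else 0) + (if l = j then d/2 else 0))
          = (if l = i then |x l| ^ (d/2) else 1) * (if l = j then |x l| ^ (d/2) else 1) := by
        intro l; rw [pow_add]; congr 1 <;> split_ifs <;> simp
      beta_reduce
      rw [Finset.prod_congr rfl (fun l _ => this l), Finset.prod_mul_distrib,
        Finset.prod_ite_eq' Finset.univ i (fun l => |x l| ^ (d/2)),
        Finset.prod_ite_eq' Finset.univ j (fun l => |x l| ^ (d/2)),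
        if_pos (Finset.mem_univ i), if_pos (Finset.mem_univ j)]
  have hsome : ∀ k, ∫⁻ x, f (some k) x ∂μ = 1 := by
    intro k
    simp only [hf, Option.elim]
    rw [← ofReal_integral_eq_lintegral_ofReal (hint1 k)
      (Filter.Eventually.of_forall fun x => by positivity)]
    have : ∫ x, |x k| ^ d ∂μ = ∫ x, x k ^ d ∂μ := by
      refine integral_congr_ae (Filter.Eventually.of_forall fun x => ?_)
      have hdev : Even d := ⟨r, hr⟩
      exact hdev.pow_abs _
    rw [this, hmom k, ENNReal.ofReal_one]
  set A : ℝ := ∫ x, |x i| ^ (d/2) * |x j| ^ (d/2) ∂μ with hA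
  have hAnn : 0 ≤ A := integral_nonneg fun x => by positivity
  have hnoneI : ∫⁻ x, f none x ∂μ = ENNReal.ofReal A := by
    simp only [hf, Option.elim]
    rw [← ofReal_integral_eq_lintegral_ofReal hintY
      (Filter.Eventually.of_forall fun x => by positivity)]
  -- rewrite the two sides of Hölder
  set B : ℝ := ∫ x, ∏ k, |x k| ^ α k ∂μ with hB
  have hBnn : 0 ≤ B := integral_nonneg fun x => Finset.prod_nonneg fun k _ => by positivity
  have hlhs : ∫⁻ x, ∏ o : Option (Fin m), f o x ^ p o ∂μ = ENNReal.ofReal B := by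
    rw [lintegral_congr hpt, ← ofReal_integral_eq_lintegral_ofReal (hint α hdeg.le)
      (Filter.Eventually.of_forall fun x => Finset.prod_nonneg fun k _ => by positivity)]
  have hrhs : ∏ o : Option (Fin m), (∫⁻ x, f o x ∂μ) ^ p o
      = ENNReal.ofReal A ^ ((4:ℝ)/d) := by
    rw [Fintype.prod_option, hnoneI]
    have : ∀ k, (∫⁻ x, f (some k) x ∂μ) ^ p (some k) = 1 := by
      intro k; rw [hsome k, ENNReal.one_rpow]
    rw [Finset.prod_congr rfl (fun k _ => this k), Finset.prod_const_one, mul_one]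
    rfl
  rw [hlhs, hrhs] at holder
  -- conclude
  have hmain : B ≤ A ^ ((4:ℝ)/d) := by
    have ht : ENNReal.ofReal A ^ ((4:ℝ)/d) ≠ ⊤ :=
      ENNReal.rpow_ne_top_of_nonneg (by positivity) ENNReal.ofReal_ne_top
    have := ENNReal.toReal_mono ht holder
    rwa [ENNReal.toReal_ofReal hBnn, ← ENNReal.toReal_rpow, ENNReal.toReal_ofReal hAnn] at this
  have : (∫ x, ∏ k, x k ^ α k ∂μ) = B := by
    refine integral_congr_ae (Filter.Eventually.of_forall fun x => ?_)
    exact Finset.prod_congr rfl fun k _ => ((hsq k).pow_abs _).symm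
  rw [this]
  exact hmain
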